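/- Under setup (S), if v > 0, then for every real t the moment generating function of the normalized variable converges to that of the standard normal: lim_{n→∞} E[exp(t·(X_n − e·n)/√(v·n))] = lim_{n→∞} P_n(e^{t/√(v·n)}) · e^{−t·e·n/√(v·n)} / P_n(1) = e^{t²/2}. -/

import Mathlib

open Polynomial Filter Set MeasureTheory
open scoped Topology

/-- Sum of the coefficients `p i` of `P` over indices `0 ≤ i ≤ y`. -/
noncomputable def cdfSum (P : Polynomial ℝ) (y : ℝ) : ℝ :=
  ∑ i ∈ P.support, if (i : ℝ) ≤ y then P.coeff i else 0

/-- The standard normal cumulative distribution function. -/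
noncomputable def stdNormalCDF (x : ℝ) : ℝ :=
  (Real.sqrt (2 * Real.pi))⁻¹ * ∫ u in Set.Iic x, Real.exp (-u ^ 2 / 2)

theorem embedding_clt_mgf_convergence
    (k : ℕ) (hk : 1 ≤ k)
    (P : ℕ → Polynomial ℝ) (b : ℕ → Polynomial ℝ)
    (hPcoeff : ∀ n i, ∃ m : ℕ, (P n).coeff i = (m : ℝ))
    (hPpos : ∀ n, 1 ≤ n → 0 < (P n).eval 1)
    (hbint : ∀ j i, ∃ m : ℤ, (b j).coeff i = (m : ℝ))
    (hrec : ∀ n, k < n → ∀ x : ℝ,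
      (P n).eval x = ∑ j ∈ Finset.range k, (b (j + 1)).eval x * (P (n - (j + 1))).eval x)
    (F : ℝ → ℝ → ℝ)
    (hF : ∀ x l : ℝ,
      F x l = l ^ k - ∑ j ∈ Finset.range k, (b (j + 1)).eval x * l ^ (k - (j + 1)))
    (δ : ℝ) (hδ : 0 < δ) (lam : ℝ → ℝ)
    (hlamC2 : ContDiffOn ℝ 2 lam (Set.Ioo (1 - δ) (1 + δ)))
    (hlamroot : ∀ x ∈ Set.Ioo (1 - δ) (1 + δ), F x (lam x) = 0)
    (D : ℝ) (hD : D = lam 1) (hDpos : 0 < D)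
    (Q : Polynomial ℂ)
    (hQ : Q = X ^ k -
      ∑ j ∈ Finset.range k, Polynomial.C (((b (j + 1)).eval 1 : ℝ) : ℂ) * X ^ (k - (j + 1)))
    (hmult : Q.rootMultiplicity (D : ℂ) = 1)
    (hdom : ∀ μ : ℂ, Q.eval μ = 0 → μ ≠ (D : ℂ) → ‖μ‖ < D)
    (a : ℝ → ℝ)
    (hunif : TendstoUniformlyOn (fun n x => (P n).eval x / lam x ^ n) a
      Filter.atTop (Set.Ioo (1 - δ) (1 + δ)))
    (ha1 : ContinuousAt a 1) (hapos : 0 < a 1)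
    (e v : ℝ) (he : e = deriv lam 1 / D)
    (hv : v = (-(deriv lam 1) ^ 2 + D * deriv (deriv lam) 1 + D * deriv lam 1) / D ^ 2)
    (hvpos : 0 < v) :
    ∀ t : ℝ, Filter.Tendsto (fun n : ℕ =>
      (P n).eval (Real.exp (t / Real.sqrt (v * n))) *
        Real.exp (-(t * (e * n)) / Real.sqrt (v * n)) / (P n).eval 1)
      Filter.atTop (nhds (Real.exp (t ^ 2 / 2))) := by
  intro t
  set S : Set ℝ := Set.Ioo (1 - δ) (1 + δ) with hSdef
  have hS_open : IsOpen S := isOpen_Ioo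
  have h1S : (1 : ℝ) ∈ S := ⟨by linarith, by linarith⟩
  have hlam1 : lam 1 = D := hD.symm
  -- the set where lam is positive
  set T : Set ℝ := S ∩ lam ⁻¹' Set.Ioi 0 with hTdef
  have hT_open : IsOpen T :=
    hlamC2.continuousOn.isOpen_inter_preimage hS_open isOpen_Ioi
  have h1T : (1 : ℝ) ∈ T := ⟨h1S, by simpa [hlam1] using hDpos⟩
  have hTpos : ∀ x ∈ T, 0 < lam x := fun x hx => hx.2
  -- differentiability facts for lam
  have hkey : DifferentiableOn ℝ lam S ∧ ContDiffOn ℝ 1 (deriv lam) S := by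
    have h2 : ContDiffOn ℝ ((1 : ℕ) + 1) lam S := by
      exact_mod_cast hlamC2
    obtain ⟨h1, -, h3⟩ := (contDiffOn_succ_iff_deriv_of_isOpen hS_open).1 h2
    exact ⟨h1, h3⟩
  have hlam_diff : ∀ x ∈ S, DifferentiableAt ℝ lam x := fun x hx =>
    hkey.1.differentiableAt (hS_open.mem_nhds hx)
  have hdlam_diff : DifferentiableAt ℝ (deriv lam) 1 :=
    (hkey.2.differentiableOn one_ne_zero).differentiableAt (hS_open.mem_nhds h1S)
  -- the set W around 0
  set W : Set ℝ := Real.exp ⁻¹' T with hWdef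
  have hW_open : IsOpen W := hT_open.preimage Real.continuous_exp
  have h0W : (0 : ℝ) ∈ W := by simp [hWdef, Real.exp_zero, h1T]
  -- g and its derivative ψ
  set g : ℝ → ℝ := fun s => Real.log (lam (Real.exp s)) with hgdef
  set ψ : ℝ → ℝ := fun s => deriv lam (Real.exp s) * Real.exp s / lam (Real.exp s)
    with hψdef
  have hg : ∀ s ∈ W, HasDerivAt g (ψ s) s := by
    intro s hs
    have hx : Real.exp s ∈ T := hs
    have hlamd : HasDerivAt lam (deriv lam (Real.exp s)) (Real.exp s) :=
      (hlam_diff _ hx.1).hasDerivAt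
    have hcomp : HasDerivAt (fun s => lam (Real.exp s))
        (deriv lam (Real.exp s) * Real.exp s) s :=
      hlamd.comp s (Real.hasDerivAt_exp s)
    have := (Real.hasDerivAt_log (ne_of_gt (hTpos _ hx))).comp s hcomp
    exact this.congr_deriv (by simp [hψdef, div_eq_inv_mul, mul_comm])
  have hg0 : g 0 = Real.log D := by simp [hgdef, Real.exp_zero, hlam1]
  have hψ0 : ψ 0 = e := by
    simp [hψdef, Real.exp_zero, hlam1, he]
  -- ψ has derivative v at 0
  have hψd : HasDerivAt ψ v 0 := by
    have hA : HasDerivAt (fun s => deriv lam (Real.exp s))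
        (deriv (deriv lam) 1 * Real.exp 0) 0 := by
      have hd1 : HasDerivAt (deriv lam) (deriv (deriv lam) 1) (Real.exp 0) := by
        rw [Real.exp_zero]; exact hdlam_diff.hasDerivAt
      exact hd1.comp 0 (Real.hasDerivAt_exp 0)
    have hB : HasDerivAt Real.exp (Real.exp 0) 0 := Real.hasDerivAt_exp 0
    have hC : HasDerivAt (fun s => lam (Real.exp s)) (deriv lam 1 * Real.exp 0) 0 := by
      have hd1 : HasDerivAt lam (deriv lam 1) (Real.exp 0) := by
        rw [Real.exp_zero]; exact (hlam_diff 1 h1S).hasDerivAt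
      exact hd1.comp 0 (Real.hasDerivAt_exp 0)
    have hnum : HasDerivAt (fun s => deriv lam (Real.exp s) * Real.exp s)
        (deriv (deriv lam) 1 * Real.exp 0 * Real.exp 0 +
          deriv lam (Real.exp 0) * Real.exp 0) 0 := hA.mul hB
    have hC0 : lam (Real.exp 0) ≠ 0 := by
      simp [Real.exp_zero, hlam1]; exact ne_of_gt hDpos
    have := hnum.div hC hC0
    refine this.congr_deriv ?_
    rw [hv]
    simp only [Real.exp_zero, hlam1, mul_one]
    field_simp
    ring
  -- the key second-order limit
  have hkeylim : Tendsto (fun u => (g u - g 0 - e * u) / u ^ 2) (𝓝[≠] (0:ℝ))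
      (𝓝 (v / 2)) := by
    have hWnhds : W ∈ 𝓝 (0 : ℝ) := hW_open.mem_nhds h0W
    apply HasDerivAt.lhopital_zero_nhdsNE
      (f' := fun u => ψ u - e) (g' := fun u => 2 * u)
    · filter_upwards [nhdsWithin_le_nhds hWnhds] with u hu
      have h1 : HasDerivAt (fun u => g u - g 0) (ψ u) u := (hg u hu).sub_const _
      have h2 : HasDerivAt (fun u : ℝ => e * u) (e * 1) u :=
        (hasDerivAt_id u).const_mul e
      exact (h1.sub h2).congr_deriv (by rw [mul_one])
    · filter_upwards with u
      simpa using (hasDerivAt_pow 2 u)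
    · filter_upwards [self_mem_nhdsWithin] with u hu
      simp only [mul_ne_zero_iff]
      exact ⟨two_ne_zero, hu⟩
    · have hcont : Tendsto (fun u => g u - g 0 - e * u) (𝓝 (0:ℝ))
          (𝓝 (g 0 - g 0 - e * 0)) := by
        have hgc : ContinuousAt g 0 := (hg 0 h0W).continuousAt
        exact ((hgc.sub continuousAt_const).sub
          (continuousAt_const.mul continuousAt_id)).tendsto
      have : Tendsto (fun u => g u - g 0 - e * u) (𝓝 (0:ℝ)) (𝓝 0) := by
        simpa using hcont
      exact this.mono_left nhdsWithin_le_nhds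
    · have : Tendsto (fun u : ℝ => u ^ 2) (𝓝 (0:ℝ)) (𝓝 ((0:ℝ) ^ 2)) :=
        (continuous_pow 2).continuousAt
      simpa using this.mono_left nhdsWithin_le_nhds
    · have hslope := hasDerivAt_iff_tendsto_slope.1 hψd
      refine (hslope.div_const 2).congr fun x => ?_
      rw [slope_def_field, hψ0, sub_zero, div_div, mul_comm]
  -- positivity of P n 1 etc.
  have hDn : ∀ n : ℕ, (0:ℝ) < D ^ n := fun n => pow_pos hDpos n
  by_cases ht : t = 0
  · -- trivial case
    subst ht
    have : Tendsto (fun _ : ℕ => (1:ℝ)) atTop (𝓝 (Real.exp ((0:ℝ) ^ 2 / 2))) := by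
      simpa using tendsto_const_nhds
    refine this.congr' ?_
    filter_upwards [eventually_ge_atTop 1] with n hn
    have hP1 : (P n).eval 1 ≠ 0 := ne_of_gt (hPpos n hn)
    simp [Real.exp_zero, hP1]
  -- main case t ≠ 0
  have hsqrt_top : Tendsto (fun n : ℕ => Real.sqrt (v * n)) atTop atTop := by
    have h1 : Tendsto (fun n : ℕ => v * (n:ℝ)) atTop atTop :=
      (tendsto_natCast_atTop_atTop).const_mul_atTop hvpos
    have h2 : Tendsto Real.sqrt atTop atTop := by
      refine tendsto_atTop_atTop.2 fun c => ⟨c ^ 2, fun x hx => ?_⟩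
      calc c ≤ |c| := le_abs_self c
        _ = Real.sqrt (c ^ 2) := (Real.sqrt_sq_eq_abs c).symm
        _ ≤ Real.sqrt x := Real.sqrt_le_sqrt hx
    exact h2.comp h1
  set u : ℕ → ℝ := fun n => t / Real.sqrt (v * n) with hudef
  have hu0 : Tendsto u atTop (𝓝 0) := tendsto_const_nhds.div_atTop hsqrt_top
  have hune : ∀ᶠ n in atTop, u n ≠ 0 := by
    filter_upwards [eventually_ge_atTop 1] with n hn
    have hpos : 0 < Real.sqrt (v * n) := Real.sqrt_pos.2 (by positivity)
    exact div_ne_zero ht (ne_of_gt hpos)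
  have hu0' : Tendsto u atTop (𝓝[≠] 0) :=
    tendsto_nhdsWithin_iff.2 ⟨hu0, hune⟩
  -- exponent limit
  have hexp_lim : Tendsto (fun n : ℕ => (n:ℝ) * (g (u n) - g 0 - e * u n)) atTop
      (𝓝 (t ^ 2 / 2)) := by
    have hcomp : Tendsto (fun n : ℕ => (g (u n) - g 0 - e * u n) / (u n) ^ 2) atTop
        (𝓝 (v / 2)) := hkeylim.comp hu0'
    have := hcomp.const_mul (t ^ 2 / v)
    have heq : (t ^ 2 / v) * (v / 2) = t ^ 2 / 2 := by
      field_simp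
    rw [heq] at this
    refine this.congr' ?_
    filter_upwards [eventually_ge_atTop 1] with n hn
    have hvn : (0:ℝ) < v * n := by positivity
    have hsq : (u n) ^ 2 = t ^ 2 / (v * n) := by
      rw [hudef]
      simp only [div_pow]
      rw [Real.sq_sqrt hvn.le]
    have hn0 : (0:ℝ) < (n:ℝ) := by exact_mod_cast hn
    rw [hsq]
    field_simp
  have hBlim : Tendsto (fun n : ℕ => Real.exp ((n:ℝ) * (g (u n) - g 0 - e * u n)))
      atTop (𝓝 (Real.exp (t ^ 2 / 2))) :=
    (Real.continuous_exp.continuousAt.tendsto).comp hexp_lim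
  -- the ratio of a_n's
  set xs : ℕ → ℝ := fun n => Real.exp (u n) with hxsdef
  have hxs1 : Tendsto xs atTop (𝓝 1) := by
    have := (Real.continuous_exp.continuousAt.tendsto).comp hu0
    simpa [Real.exp_zero, Function.comp_def] using this
  have hxsW : ∀ᶠ n in atTop, xs n ∈ T := by
    have : Tendsto xs atTop (𝓝 1) := hxs1
    exact this.eventually (hT_open.mem_nhds h1T)
  have hxsS : ∀ᶠ n in atTop, xs n ∈ S :=
    hxsW.mono fun n hn => hn.1
  have hxsSt : Tendsto xs atTop (𝓝[S] 1) :=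
    tendsto_nhdsWithin_iff.2 ⟨hxs1, hxsS⟩
  have hF1 : Tendsto (fun n : ℕ => (P n).eval (xs n) / lam (xs n) ^ n) atTop (𝓝 (a 1)) :=
    hunif.tendsto_comp ha1.continuousWithinAt hxsSt
  have hF2 : Tendsto (fun n : ℕ => (P n).eval 1 / lam 1 ^ n) atTop (𝓝 (a 1)) := by
    refine hunif.tendsto_comp ha1.continuousWithinAt ?_
    exact tendsto_nhdsWithin_iff.2 ⟨tendsto_const_nhds, Filter.Eventually.of_forall fun _ => h1S⟩
  have hmain : Tendsto (fun n : ℕ =>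
      ((P n).eval (xs n) / lam (xs n) ^ n) / ((P n).eval 1 / lam 1 ^ n) *
        Real.exp ((n:ℝ) * (g (u n) - g 0 - e * u n))) atTop
      (𝓝 (a 1 / a 1 * Real.exp (t ^ 2 / 2))) :=
    (hF1.div hF2 (ne_of_gt hapos)).mul hBlim
  rw [div_self (ne_of_gt hapos), one_mul] at hmain
  refine hmain.congr' ?_
  filter_upwards [eventually_ge_atTop 1, hxsW] with n hn hW
  have hL : 0 < lam (xs n) := hTpos _ hW
  have hLn : (0:ℝ) < lam (xs n) ^ n := pow_pos hL n
  have hP1 : (0:ℝ) < (P n).eval 1 := hPpos n hn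
  have hexp_split : Real.exp ((n:ℝ) * (g (u n) - g 0 - e * u n)) =
      lam (xs n) ^ n / D ^ n * Real.exp (-(t * (e * n)) / Real.sqrt (v * n)) := by
    have h1 : Real.exp ((n:ℝ) * g (u n)) = lam (xs n) ^ n := by
      rw [Real.exp_nat_mul]
      congr 1
      rw [hgdef]
      exact Real.exp_log hL
    have h2 : Real.exp ((n:ℝ) * g 0) = D ^ n := by
      rw [Real.exp_nat_mul]
      congr 1
      rw [hg0]
      exact Real.exp_log hDpos
    have h3 : -(t * (e * n)) / Real.sqrt (v * n) = (n:ℝ) * (- (e * u n)) := by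
      rw [hudef]
      rw [neg_div]
      rw [mul_div_assoc]
      ring
    rw [h3]
    rw [show (n:ℝ) * (g (u n) - g 0 - e * u n)
        = (n:ℝ) * g (u n) - (n:ℝ) * g 0 + (n:ℝ) * (-(e * u n)) by ring]
    rw [Real.exp_add, Real.exp_sub, h1, h2]
  rw [hexp_split, hlam1]
  set E := Real.exp (-(t * (e * ↑n)) / Real.sqrt (v * ↑n)) with hE
  set A := (P n).eval (xs n) with hA
  set B := (P n).eval 1 with hB
  set L := lam (xs n) ^ n with hLdef
  have hL0 : L ≠ 0 := ne_of_gt hLn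
  have hD0 : D ^ n ≠ 0 := ne_of_gt (hDn n)
  have hB0 : B ≠ 0 := ne_of_gt hP1
  field_simp
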